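/- arXiv:2601.07498 — 4 statements merged into one kernel-verified Lean document; each statement's English description precedes it below -/
import Mathlib

section
/- Let A ∈ ℝ^{m×n} have no zero rows, let L₁ be the lower triangular part (including diagonal) of AAᵀ. Then Gᵀ = I − AᵀL₁⁻ᵀA satisfies Gᵀ·(Aᵀeₘ) = 0; i.e., the last row aₘ of A is a left eigenvector of G = I − AᵀL₁⁻¹A with eigenvalue 0. -/
open Matrix

/-- If `A ∈ ℝ^{m×n}` has no zero rows and `L₁` is the lower triangular part
(including the diagonal) of `AAᵀ`, then `Gᵀ = I − AᵀL₁⁻ᵀA` satisfies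
`Gᵀ (Aᵀ eₘ) = 0`, i.e. the last row `aₘ` of `A` is a left eigenvector of
`G = I − AᵀL₁⁻¹A` with eigenvalue `0`. -/
theorem stmt_2 (m n : ℕ) (hm : 0 < m) (A : Matrix (Fin m) (Fin n) ℝ)
    (hrows : ∀ i : Fin m, A i ≠ 0)
    (L₁ : Matrix (Fin m) (Fin m) ℝ)
    (hL₁ : L₁ = Matrix.of fun i j => if j ≤ i then (A * Aᵀ) i j else 0)
    (Gt : Matrix (Fin n) (Fin n) ℝ)
    (hGt : Gt = 1 - Aᵀ * (L₁ᵀ)⁻¹ * A) :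
    Gt.mulVec (Aᵀ.mulVec (Pi.single (⟨m - 1, Nat.sub_lt hm one_pos⟩ : Fin m) 1)) = 0 := by
  set e : Fin m := ⟨m - 1, Nat.sub_lt hm one_pos⟩ with he
  -- determinant of L₁ is the product of diagonal entries
  have hdet : L₁.det = ∏ i, (A * Aᵀ) i i := by
    rw [hL₁, Matrix.det_of_lowerTriangular]
    · simp
    · intro i j hij
      simp [not_le.mpr hij, le_of_lt]
      intro h
      exact absurd h (not_le.mpr hij)
  have hdiag : ∀ i : Fin m, 0 < (A * Aᵀ) i i := by
    intro i
    have : (A * Aᵀ) i i = ∑ j, A i j * A i j := by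
      simp [Matrix.mul_apply, Matrix.transpose_apply]
    rw [this]
    obtain ⟨j, hj⟩ := Function.ne_iff.mp (hrows i)
    exact Finset.sum_pos' (fun k _ => mul_self_nonneg _)
      ⟨j, Finset.mem_univ j, mul_self_pos.mpr hj⟩
  have hunit : IsUnit L₁.det := by
    rw [hdet]
    exact (Finset.prod_pos (fun i _ => hdiag i)).ne'.isUnit
  have hunitT : IsUnit (L₁ᵀ).det := by rwa [Matrix.det_transpose]
  -- key identity: (A Aᵀ) e = L₁ᵀ e
  have hkey : (A * Aᵀ).mulVec (Pi.single e 1) = L₁ᵀ.mulVec (Pi.single e 1) := by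
    funext i
    have hle : i ≤ e := by
      rcases i with ⟨i, hi⟩
      exact Fin.mk_le_mk.mpr (Nat.le_sub_one_of_lt hi)
    have hsym : (A * Aᵀ) e i = (A * Aᵀ) i e := by
      simp [Matrix.mul_apply, Matrix.transpose_apply, mul_comm]
    simp [Matrix.mulVec, dotProduct, Pi.single_apply, hL₁, hle, hsym]
  have h2 : (L₁ᵀ)⁻¹.mulVec (L₁ᵀ.mulVec (Pi.single e 1)) = Pi.single e 1 := by
    rw [Matrix.mulVec_mulVec, Matrix.nonsing_inv_mul _ hunitT, Matrix.one_mulVec]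
  have hmain : (Aᵀ * (L₁ᵀ)⁻¹ * A) *ᵥ (Aᵀ *ᵥ Pi.single e 1) = Aᵀ *ᵥ Pi.single e 1 := by
    rw [Matrix.mulVec_mulVec, Matrix.mul_assoc (Aᵀ * (L₁ᵀ)⁻¹) A Aᵀ,
      ← Matrix.mulVec_mulVec, hkey, ← Matrix.mulVec_mulVec, h2]
  rw [hGt, Matrix.sub_mulVec, Matrix.one_mulVec, hmain, sub_self]
end

section
/- Let A ∈ ℝ^{m×n} have no zero rows, let L₁ be the lower triangular part (including diagonal) of AAᵀ, and suppose that for some index j with 2 ≤ j ≤ m the row aⱼ is orthogonal to all earlier rows a₁,…,a_{j−1}. Then AAᵀeⱼ = L₁eⱼ, and consequently Aᵀeⱼ = aⱼ is an eigenvector of G = I − AᵀL₁⁻¹A with eigenvalue 0. -/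
open Matrix

/-- If `A ∈ ℝ^{m×n}` has no zero rows, `L₁` is the lower triangular part
(including the diagonal) of `AAᵀ`, and row `aⱼ` (with `2 ≤ j` in 1-based
indexing) is orthogonal to all earlier rows, then `AAᵀeⱼ = L₁eⱼ` and
`aⱼ = Aᵀeⱼ` is an eigenvector of `G = I − AᵀL₁⁻¹A` with eigenvalue `0`. -/
theorem stmt_3 (m n : ℕ) (A : Matrix (Fin m) (Fin n) ℝ)
    (hrows : ∀ i : Fin m, A i ≠ 0)
    (L₁ : Matrix (Fin m) (Fin m) ℝ)
    (hL₁ : L₁ = Matrix.of fun i j => if j ≤ i then (A * Aᵀ) i j else 0)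
    (j : Fin m) (hj : 1 ≤ (j : ℕ))
    (horth : ∀ i : Fin m, i < j → A i ⬝ᵥ A j = 0) :
    (A * Aᵀ).mulVec (Pi.single j 1) = L₁.mulVec (Pi.single j 1) ∧
    (1 - Aᵀ * L₁⁻¹ * A).mulVec (Aᵀ.mulVec (Pi.single j 1)) = 0 := by
  have key : ∀ i, (A * Aᵀ) i j = L₁ i j := by
    intro i
    rcases le_or_gt j i with h | h
    · simp [hL₁, h]
    · have h0 : A i ⬝ᵥ A j = 0 := horth i h
      simp [hL₁, not_le.mpr h, Matrix.mul_apply, Matrix.transpose_apply]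
      simpa [dotProduct] using h0
  have hAL : (A * Aᵀ).mulVec (Pi.single j 1) = L₁.mulVec (Pi.single j 1) := by
    ext i
    simp [Matrix.mulVec_single, key i]
  refine ⟨hAL, ?_⟩
  -- L₁ is invertible
  have htri : L₁.BlockTriangular OrderDual.toDual := by
    intro i k hik
    simp only [OrderDual.toDual_lt_toDual] at hik
    simp [hL₁, not_le.mpr hik]
  have hdiag : ∀ i, L₁ i i ≠ 0 := by
    intro i
    have : (A i) ⬝ᵥ (A i) ≠ 0 := fun h => hrows i (dotProduct_self_eq_zero.mp h)
    simp only [hL₁, Matrix.of_apply, le_refl, if_true, Matrix.mul_apply,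
      Matrix.transpose_apply]
    simpa [dotProduct] using this
  have hdet : L₁.det ≠ 0 := by
    rw [Matrix.det_of_lowerTriangular L₁ htri]
    exact Finset.prod_ne_zero_iff.mpr fun i _ => hdiag i
  have hinv : L₁⁻¹ * L₁ = 1 := Matrix.nonsing_inv_mul L₁ (isUnit_iff_ne_zero.mpr hdet)
  rw [Matrix.sub_mulVec, Matrix.one_mulVec, ← Matrix.mulVec_mulVec _ (Aᵀ * L₁⁻¹) A,
    Matrix.mulVec_mulVec _ A Aᵀ, hAL, Matrix.mulVec_mulVec, Matrix.mul_assoc Aᵀ L₁⁻¹ L₁, hinv, Matrix.mul_one,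
    sub_self]
end

section
/- Let A ∈ ℝ^{m×n}, let AAᵀ = L̂ + D + L̂ᵀ with D diagonal and L̂ strictly lower triangular, let 0 < ω < 2 and L = L̂ + ω⁻¹D with L invertible. Then (I − AᵀL⁻ᵀA)(I − AᵀL⁻¹A) = I − (2ω⁻¹ − 1)·AᵀL⁻ᵀDL⁻¹A. -/
open Matrix

/-- Let `AAᵀ = L̂ + D + L̂ᵀ` with `D` diagonal and `L̂` strictly lower
triangular, let `0 < ω < 2` and `L = L̂ + ω⁻¹D` be invertible. Then
`(I − AᵀL⁻ᵀA)(I − AᵀL⁻¹A) = I − (2ω⁻¹ − 1)·AᵀL⁻ᵀDL⁻¹A`. -/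
theorem stmt_4 (m n : ℕ) (A : Matrix (Fin m) (Fin n) ℝ)
    (D Lhat : Matrix (Fin m) (Fin m) ℝ)
    (hD : D.IsDiag)
    (hLhat : ∀ i j : Fin m, i ≤ j → Lhat i j = 0)
    (hdecomp : A * Aᵀ = Lhat + D + Lhatᵀ)
    (ω : ℝ) (hω₀ : 0 < ω) (hω₂ : ω < 2)
    (L : Matrix (Fin m) (Fin m) ℝ) (hL : L = Lhat + ω⁻¹ • D)
    (hLinv : IsUnit L.det) :
    (1 - Aᵀ * (L⁻¹)ᵀ * A) * (1 - Aᵀ * L⁻¹ * A) =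
      1 - (2 * ω⁻¹ - 1) • (Aᵀ * (L⁻¹)ᵀ * D * L⁻¹ * A) := by
  have hDT : Dᵀ = D := by
    ext i j
    rcases eq_or_ne i j with rfl | h
    · simp [Matrix.transpose_apply]
    · simp [Matrix.transpose_apply, hD h, hD (Ne.symm h)]
  have hAAT : A * Aᵀ = L + Lᵀ - (2 * ω⁻¹ - 1) • D := by
    rw [hdecomp, hL, Matrix.transpose_add, Matrix.transpose_smul, hDT]
    module
  have hi1 : L * L⁻¹ = 1 := Matrix.mul_nonsing_inv L hLinv
  have hT : (L⁻¹)ᵀ * Lᵀ = 1 := by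
    rw [← Matrix.transpose_mul, hi1, Matrix.transpose_one]
  have key : Aᵀ * (L⁻¹)ᵀ * A * (Aᵀ * L⁻¹ * A) =
      Aᵀ * (L⁻¹)ᵀ * A + Aᵀ * L⁻¹ * A
        - (2 * ω⁻¹ - 1) • (Aᵀ * (L⁻¹)ᵀ * D * L⁻¹ * A) := by
    have h1 : Aᵀ * (L⁻¹)ᵀ * A * (Aᵀ * L⁻¹ * A)
        = Aᵀ * (L⁻¹)ᵀ * (A * Aᵀ) * (L⁻¹ * A) := by
      simp only [Matrix.mul_assoc]
    rw [h1, hAAT]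
    simp only [Matrix.mul_sub, Matrix.sub_mul, Matrix.mul_add, Matrix.add_mul,
      Matrix.mul_smul, Matrix.smul_mul]
    have h2 : Aᵀ * (L⁻¹)ᵀ * L * (L⁻¹ * A) = Aᵀ * (L⁻¹)ᵀ * A := by
      rw [Matrix.mul_assoc (Aᵀ * (L⁻¹)ᵀ) L, ← Matrix.mul_assoc L,
        hi1, Matrix.one_mul]
    have h3 : Aᵀ * (L⁻¹)ᵀ * Lᵀ * (L⁻¹ * A) = Aᵀ * L⁻¹ * A := by
      rw [Matrix.mul_assoc Aᵀ, hT, Matrix.mul_one, ← Matrix.mul_assoc]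
    have h4 : Aᵀ * (L⁻¹)ᵀ * D * (L⁻¹ * A) = Aᵀ * (L⁻¹)ᵀ * D * L⁻¹ * A := by
      simp only [Matrix.mul_assoc]
    rw [h2, h3, h4]
  calc (1 - Aᵀ * (L⁻¹)ᵀ * A) * (1 - Aᵀ * L⁻¹ * A)
      = 1 - Aᵀ * (L⁻¹)ᵀ * A - Aᵀ * L⁻¹ * A
        + Aᵀ * (L⁻¹)ᵀ * A * (Aᵀ * L⁻¹ * A) := by noncomm_ring
    _ = 1 - (2 * ω⁻¹ - 1) • (Aᵀ * (L⁻¹)ᵀ * D * L⁻¹ * A) := by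
        rw [key]; abel
end

section
/- Let G ∈ ℝ^{n×n} and suppose λ > 0 is a real eigenvalue of G = I − AᵀL⁻¹A with unit eigenvector x, where A ∈ ℝ^{m×n}, L ∈ ℝ^{m×m} invertible with L + Lᵀ positive definite, and ‖Ax‖ ≥ σ_min > 0. Then λ ≤ 1 − ν(L⁻¹)·σ_min², where ν(L⁻¹) is the smallest eigenvalue of the symmetric part of L⁻¹. -/
open Matrix

/-- Rayleigh lower bound: for a real symmetric matrix, the quadratic form is bounded
below by the smallest eigenvalue times the squared norm. -/
lemma rayleigh_lower {m : ℕ} {M : Matrix (Fin m) (Fin m) ℝ} (hM : M.IsHermitian)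
    (y : Fin m → ℝ) :
    (⨅ i : Fin m, hM.eigenvalues i) * (y ⬝ᵥ y) ≤ y ⬝ᵥ (M *ᵥ y) := by
  set c := ⨅ i : Fin m, hM.eigenvalues i with hc_def
  have hc : ∀ i, c ≤ hM.eigenvalues i := fun i => ciInf_le (Set.Finite.bddBelow (Set.finite_range _)) i
  set U : Matrix (Fin m) (Fin m) ℝ := (hM.eigenvectorUnitary : Matrix (Fin m) (Fin m) ℝ) with hU_def
  have hUU : U * star U = 1 := (Matrix.mem_unitaryGroup_iff).mp hM.eigenvectorUnitary.2
  have h1 : M - c • 1 = U * diagonal (fun i => hM.eigenvalues i - c) * star U := by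
    have hd : diagonal (fun i => hM.eigenvalues i - c) =
        diagonal (RCLike.ofReal ∘ hM.eigenvalues) - c • (1 : Matrix (Fin m) (Fin m) ℝ) := by
      rw [smul_one_eq_diagonal, diagonal_sub]
      rfl
    rw [hd, mul_sub, sub_mul]
    conv_lhs => rw [hM.spectral_theorem, Unitary.conjStarAlgAut_apply]
    congr 1
    rw [mul_smul_comm, smul_mul_assoc, mul_one, hUU]
  have hN : (M - c • 1).PosSemidef := by
    rw [h1]
    have hd : (diagonal (fun i => hM.eigenvalues i - c)).PosSemidef :=
      posSemidef_diagonal_iff.mpr fun i => sub_nonneg.mpr (hc i)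
    exact hd.mul_mul_conjTranspose_same U
  have h2 := hN.dotProduct_mulVec_nonneg y
  have hstar : star y = y := by simp
  rw [hstar, sub_mulVec, dotProduct_sub, smul_mulVec, one_mulVec, dotProduct_smul,
    smul_eq_mul] at h2
  linarith

/-- If `λ > 0` is a real eigenvalue of `G = I − AᵀL⁻¹A` with unit eigenvector
`x`, `L` invertible with `L + Lᵀ` positive definite, and `‖Ax‖ ≥ σ_min > 0`,
then `λ ≤ 1 − ν(L⁻¹)·σ_min²`, where `ν(L⁻¹)` is the smallest eigenvalue of
the symmetric part of `L⁻¹`. -/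
theorem stmt_8 (m n : ℕ) (A : Matrix (Fin m) (Fin n) ℝ)
    (L : Matrix (Fin m) (Fin m) ℝ)
    (hL : IsUnit L.det) (hpd : (L + Lᵀ).PosDef)
    (hH : (((1 : ℝ) / 2) • (L⁻¹ + (L⁻¹)ᵀ)).IsHermitian)
    (x : Fin n → ℝ) (hx : x ⬝ᵥ x = 1)
    (σmin : ℝ) (hσ : 0 < σmin)
    (hAx : σmin ^ 2 ≤ A.mulVec x ⬝ᵥ A.mulVec x)
    (lam : ℝ) (hlam : 0 < lam)
    (heig : (1 - Aᵀ * L⁻¹ * A).mulVec x = lam • x) :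
    lam ≤ 1 - (⨅ i : Fin m, hH.eigenvalues i) * σmin ^ 2 := by
  set H : Matrix (Fin m) (Fin m) ℝ := ((1 : ℝ) / 2) • (L⁻¹ + (L⁻¹)ᵀ) with hH_def
  set y : Fin m → ℝ := A.mulVec x with hy_def
  -- quadratic form of H equals that of L⁻¹
  have key : ∀ z : Fin m → ℝ, z ⬝ᵥ (H *ᵥ z) = z ⬝ᵥ (L⁻¹ *ᵥ z) := by
    intro z
    have ht : z ⬝ᵥ ((L⁻¹)ᵀ *ᵥ z) = z ⬝ᵥ (L⁻¹ *ᵥ z) := by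
      rw [dotProduct_mulVec, vecMul_transpose, dotProduct_comm]
    rw [hH_def, smul_mulVec, dotProduct_smul, add_mulVec, dotProduct_add, ht, smul_eq_mul]
    ring
  -- λ = 1 - yᵀ L⁻¹ y
  have hlam_eq : lam = 1 - y ⬝ᵥ (L⁻¹ *ᵥ y) := by
    have h1 : x ⬝ᵥ ((1 - Aᵀ * L⁻¹ * A) *ᵥ x) = lam := by
      rw [heig, dotProduct_smul, smul_eq_mul, hx, mul_one]
    rw [sub_mulVec, one_mulVec, dotProduct_sub, hx] at h1
    have h2 : x ⬝ᵥ ((Aᵀ * L⁻¹ * A) *ᵥ x) = y ⬝ᵥ (L⁻¹ *ᵥ y) := by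
      rw [← mulVec_mulVec, ← mulVec_mulVec, dotProduct_mulVec x Aᵀ, vecMul_transpose]
    rw [h2] at h1
    linarith
  -- H is positive definite
  have hHpd : H.PosDef := by
    refine posDef_iff_dotProduct_mulVec.mpr ⟨hH, fun z hz => ?_⟩
    have hstar : star z = z := by simp
    rw [hstar, key z]
    set w : Fin m → ℝ := L⁻¹ *ᵥ z with hw_def
    have hLw : L *ᵥ w = z := by
      rw [hw_def, mulVec_mulVec, mul_nonsing_inv _ hL, one_mulVec]
    have hwne : w ≠ 0 := by
      intro h0
      apply hz
      rw [← hLw, h0, mulVec_zero]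
    have hq := hpd.dotProduct_mulVec_pos hwne
    have hstarw : star w = w := by simp
    rw [hstarw, add_mulVec, dotProduct_add, hLw] at hq
    have hT : w ⬝ᵥ (Lᵀ *ᵥ w) = z ⬝ᵥ w := by
      rw [dotProduct_mulVec, vecMul_transpose, hLw]
    rw [hT] at hq
    have : w ⬝ᵥ z = z ⬝ᵥ w := dotProduct_comm _ _
    rw [this] at hq
    have : z ⬝ᵥ (L⁻¹ *ᵥ z) = z ⬝ᵥ w := rfl
    rw [this]
    linarith
  -- smallest eigenvalue is nonnegative
  have hν : 0 ≤ ⨅ i : Fin m, hH.eigenvalues i :=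
    Real.iInf_nonneg fun i => hHpd.posSemidef.eigenvalues_nonneg i
  have hray := rayleigh_lower hH y
  have hchain : (⨅ i : Fin m, hH.eigenvalues i) * σmin ^ 2 ≤ y ⬝ᵥ (H *ᵥ y) :=
    le_trans (mul_le_mul_of_nonneg_left hAx hν) hray
  rw [key y] at hchain
  linarith
end
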